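/- arXiv:1902.05863 — 2 statements merged into one kernel-verified Lean document; each statement's English description precedes it below -/
import Mathlib

section
/- Consider a schedule of n jobs in m batches given by an assignment B : Fin n → Fin m, with batch processing times P b = max of p j over jobs in batch b, batches processed in the given order, completion times C b = Σ_{b' ≤ b} P b', job completion times c j = C (B j), and tardy jobs those with c j > d j. Let b0 be a batch all of whose jobs are tardy, and form a new processing order by moving batch b0 to the last position while keeping the relative order of all other batches (i.e. batch b is processed at position σ(b), where σ(b0) = m−1, σ(b) = b for b < b0, and σ(b) = b−1 for b > b0; the new completion time of batch b is C' b = Σ_{b' : σ(b') ≤ σ(b)} P b'). Then C' b ≤ C b for every batch b ≠ b0, and the total number of tardy jobs under the new order is at most the total number of tardy jobs under the original order. Hence batches containing only tardy jobs may be postponed to the end without increasing the number of tardy jobs. -/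
/-- Postponing a batch all of whose jobs are tardy to the last position (keeping
the relative order of all other batches) does not increase the completion time
of any other batch, nor the total number of tardy jobs. -/
theorem postpone_all_tardy_batch
    (n m : ℕ) (p d : Fin n → ℕ) (B : Fin n → Fin m)
    (P : Fin m → ℕ)
    (hP : ∀ b, P b = (Finset.univ.filter (fun j => B j = b)).sup p)
    (C : Fin m → ℕ) (hC : ∀ b, C b = ∑ b' ∈ Finset.Iic b, P b')
    (b0 : Fin m) (hb0 : ∀ j : Fin n, B j = b0 → C (B j) > d j)
    (σ : Fin m → Fin m)
    (hσ0 : (σ b0 : ℕ) = m - 1)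
    (hσlt : ∀ b : Fin m, b < b0 → (σ b : ℕ) = (b : ℕ))
    (hσgt : ∀ b : Fin m, b0 < b → (σ b : ℕ) = (b : ℕ) - 1)
    (C' : Fin m → ℕ)
    (hC' : ∀ b, C' b = ∑ b' ∈ Finset.univ.filter (fun b' => σ b' ≤ σ b), P b') :
    (∀ b : Fin m, b ≠ b0 → C' b ≤ C b) ∧
    (Finset.univ.filter (fun j : Fin n => C' (B j) > d j)).card ≤
      (Finset.univ.filter (fun j : Fin n => C (B j) > d j)).card := by
  have h1 : ∀ b : Fin m, b ≠ b0 → C' b ≤ C b := by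
    intro b hb
    rw [hC', hC b]
    apply Finset.sum_le_sum_of_subset
    intro b' hb'
    simp only [Finset.mem_filter, Finset.mem_univ, true_and] at hb'
    rw [Finset.mem_Iic]
    have hσb' : (σ b' : ℕ) ≤ (σ b : ℕ) := hb'
    have hbm : (σ b : ℕ) < m - 1 := by
      rcases lt_or_gt_of_ne hb with h | h
      · rw [hσlt b h]
        have : (b : ℕ) < (b0 : ℕ) := h
        have := b0.isLt
        omega
      · rw [hσgt b h]
        have : (b0 : ℕ) < (b : ℕ) := h
        have := b.isLt
        omega
    have hne : b' ≠ b0 := by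
      intro e
      rw [e, hσ0] at hσb'
      omega
    rw [Fin.le_def]
    rcases lt_or_gt_of_ne hne with h' | h' <;> rcases lt_or_gt_of_ne hb with h | h
    · rw [hσlt b' h', hσlt b h] at hσb'; exact hσb'
    · rw [hσlt b' h', hσgt b h] at hσb'
      have : (b0 : ℕ) < (b : ℕ) := h
      omega
    · rw [hσgt b' h', hσlt b h] at hσb'
      have h1 : (b0 : ℕ) < (b' : ℕ) := h'
      have h2 : (b : ℕ) < (b0 : ℕ) := h
      omega
    · rw [hσgt b' h', hσgt b h] at hσb'
      have h1 : (b0 : ℕ) < (b' : ℕ) := h'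
      have h2 : (b0 : ℕ) < (b : ℕ) := h
      omega
  refine ⟨h1, Finset.card_le_card ?_⟩
  intro j hj
  simp only [Finset.mem_filter, Finset.mem_univ, true_and] at hj ⊢
  by_cases hB : B j = b0
  · exact hb0 j hB
  · exact lt_of_lt_of_le hj (h1 (B j) hB)
end

section
/- Consider a schedule of n jobs in m batches B : Fin n → Fin m with batch processing times P b = max of p j over jobs in batch b (0 for an empty batch), completion times C b = Σ_{b' ≤ b} P b', and job completion times c j = C (B j). Let j0 be a job whose processing time is maximal in its batch b0 = B j0, and form a new schedule B' with m+1 batches by keeping every other job in its original batch (via the canonical embedding Fin m → Fin (m+1)) and assigning j0 alone to the new last batch m. Then the new batch processing times satisfy P' b ≤ P b for every b < m (with P' m = p j0), the new completion time of every job j ≠ j0 satisfies c' j ≤ c j, and consequently the number of tardy jobs among the jobs other than j0 under the new schedule is at most that number under the original schedule. -/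
lemma Iic_castSucc_eq_image (m : ℕ) (b : Fin m) :
    Finset.Iic (Fin.castSucc b) = (Finset.Iic b).image Fin.castSucc := by
  ext x
  simp only [Finset.mem_Iic, Finset.mem_image]
  constructor
  · intro hx
    have hlt : x < Fin.last m := lt_of_le_of_lt hx (Fin.castSucc_lt_last b)
    obtain ⟨y, rfl⟩ := Fin.exists_castSucc_eq.mpr (Fin.ne_last_of_lt hlt)
    exact ⟨y, Fin.castSucc_le_castSucc_iff.mp hx, rfl⟩
  · rintro ⟨y, hy, rfl⟩
    exact Fin.castSucc_le_castSucc_iff.mpr hy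

/-- Job insertion: moving a job `j0` of maximal processing time in its batch
into a new batch placed last does not increase any original batch's processing
time, does not delay any other job, and hence does not increase the number of
tardy jobs among the other jobs. The new batch has processing time `p j0`. -/
theorem job_insertion_longest_job
    (n m : ℕ) (p d : Fin n → ℕ) (B : Fin n → Fin m)
    (P : Fin m → ℕ)
    (hP : ∀ b, P b = (Finset.univ.filter (fun j => B j = b)).sup p)
    (C : Fin m → ℕ) (hC : ∀ b, C b = ∑ b' ∈ Finset.Iic b, P b')
    (c : Fin n → ℕ) (hc : ∀ j, c j = C (B j))
    (j0 : Fin n) (hj0 : ∀ j : Fin n, B j = B j0 → p j ≤ p j0)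
    (B' : Fin n → Fin (m + 1))
    (hB' : ∀ j : Fin n, B' j = if j = j0 then Fin.last m else Fin.castSucc (B j))
    (P' : Fin (m + 1) → ℕ)
    (hP' : ∀ b, P' b = (Finset.univ.filter (fun j => B' j = b)).sup p)
    (C' : Fin (m + 1) → ℕ) (hC' : ∀ b, C' b = ∑ b' ∈ Finset.Iic b, P' b')
    (c' : Fin n → ℕ) (hc' : ∀ j, c' j = C' (B' j)) :
    (∀ b : Fin m, P' (Fin.castSucc b) ≤ P b) ∧
    (P' (Fin.last m) = p j0) ∧
    (∀ j : Fin n, j ≠ j0 → c' j ≤ c j) ∧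
    ((Finset.univ.filter (fun j : Fin n => j ≠ j0 ∧ c' j > d j)).card ≤
      (Finset.univ.filter (fun j : Fin n => j ≠ j0 ∧ c j > d j)).card) := by
  have h1 : ∀ b : Fin m, P' (Fin.castSucc b) ≤ P b := by
    intro b
    rw [hP', hP]
    apply Finset.sup_mono
    intro j hj
    simp only [Finset.mem_filter, Finset.mem_univ, true_and] at hj ⊢
    rw [hB'] at hj
    by_cases hjj : j = j0
    · simp [hjj] at hj
      exact absurd hj (Fin.ne_of_lt (Fin.castSucc_lt_last b)).symm
    · simp [hjj] at hj
      exact hj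
  have h2 : P' (Fin.last m) = p j0 := by
    rw [hP']
    have : Finset.univ.filter (fun j => B' j = Fin.last m) = {j0} := by
      ext j
      simp only [Finset.mem_filter, Finset.mem_univ, true_and, Finset.mem_singleton, hB']
      by_cases hjj : j = j0
      · simp [hjj]
      · simp [hjj]
    rw [this, Finset.sup_singleton]
  have h3 : ∀ j : Fin n, j ≠ j0 → c' j ≤ c j := by
    intro j hj
    rw [hc', hc, hC', hC, hB', if_neg hj, Iic_castSucc_eq_image,
      Finset.sum_image (fun x _ y _ h => Fin.castSucc_injective m h)]
    exact Finset.sum_le_sum fun b _ => h1 b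
  refine ⟨h1, h2, h3, ?_⟩
  apply Finset.card_le_card
  intro j hj
  simp only [Finset.mem_filter, Finset.mem_univ, true_and] at hj ⊢
  exact ⟨hj.1, lt_of_lt_of_le hj.2 (h3 j hj.1)⟩
end
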